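/- Let A be a cancellative monoid, let n ≥ 1, and let X₁, …, Xₙ be subsets of A such that X₁^× + ⋯ + Xₙ^× is non-empty. Then |X₁ + ⋯ + Xₙ| ≥ min(p(A), |X₁| + ⋯ + |Xₙ| + 1 − n). -/

import Mathlib

open Pointwise

/-- The order of `z`: the cardinality (in `ℕ∞`) of the subsemigroup
`{z, z+z, z+z+z, …}` generated by `z`. -/
noncomputable def ord {A : Type*} [AddSemigroup A] (z : A) : ℕ∞ :=
  ((AddSubsemigroup.closure {z} : AddSubsemigroup A) : Set A).encard

/-- `p(A) = inf {ord z : z ∈ A, z ≠ 0}`. -/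
noncomputable def pConst (A : Type*) [AddMonoid A] : ℕ∞ :=
  ⨅ (z : A) (_ : z ≠ 0), ord z

private lemma enat_add_nat_sub (a : ℕ∞) (n : ℕ) : a + n - n = a := by
  cases a with
  | top => simp
  | coe m => rw [← ENat.coe_add, ← ENat.coe_sub]; simp

private lemma encard_eq_coe_ncard {α : Type*} {s : Set α} (hs : s.Finite) :
    s.encard = (s.ncard : ℕ∞) := by
  rw [Set.ncard_def, ENat.coe_toNat]
  exact hs.encard_lt_top.ne

section Core

variable {A : Type*} [AddCancelMonoid A]

private lemma subset_add_right {X Y : Set A} (h0Y : 0 ∈ Y) : X ⊆ X + Y := by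
  intro x hx
  have := Set.add_mem_add hx h0Y
  rwa [add_zero] at this

private lemma subset_add_left {X Y : Set A} (h0X : 0 ∈ X) : Y ⊆ X + Y := by
  intro y hy
  have := Set.add_mem_add h0X hy
  rwa [zero_add] at this

private lemma pConst_le_ord {z : A} (hz : z ≠ 0) : pConst A ≤ ord z :=
  iInf_le_of_le z (iInf_le _ hz)

private lemma pConst_le_right {X : Set A} {z : A} (hz : z ≠ 0) (h0 : 0 ∈ X)
    (h : ∀ x ∈ X, x + z ∈ X) : pConst A ≤ X.encard := by
  have key : ∀ s ∈ AddSubsemigroup.closure ({z} : Set A), ∀ x ∈ X, x + s ∈ X := by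
    intro s hs
    refine AddSubsemigroup.closure_induction (fun w hw => ?_)
      (fun p q hp hq hP hQ x hx => ?_) hs
    · rw [Set.mem_singleton_iff] at hw; subst hw; exact h
    · rw [← add_assoc]; exact hQ _ (hP x hx)
  have hsub : ((AddSubsemigroup.closure {z} : AddSubsemigroup A) : Set A) ⊆ X := by
    intro s hs
    simpa using key s hs 0 h0
  exact le_trans (pConst_le_ord hz) (Set.encard_mono hsub)

private lemma pConst_le_left {Y : Set A} {z : A} (hz : z ≠ 0) (h0 : 0 ∈ Y)
    (h : ∀ y ∈ Y, z + y ∈ Y) : pConst A ≤ Y.encard := by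
  have key : ∀ s ∈ AddSubsemigroup.closure ({z} : Set A), ∀ y ∈ Y, s + y ∈ Y := by
    intro s hs
    refine AddSubsemigroup.closure_induction (fun w hw => ?_)
      (fun p q hp hq hP hQ y hy => ?_) hs
    · rw [Set.mem_singleton_iff] at hw; subst hw; exact h
    · rw [add_assoc]; exact hP _ (hQ y hy)
  have hsub : ((AddSubsemigroup.closure {z} : AddSubsemigroup A) : Set A) ⊆ Y := by
    intro s hs
    have := key s hs 0 h0
    simpa using this
  exact le_trans (pConst_le_ord hz) (Set.encard_mono hsub)

end Core
section Aux
variable {A : Type*} [AddCancelMonoid A]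

private lemma measure_lt {a' a y' y N : ℕ} (h1 : a' ≤ a) (h2 : y' < y) :
    a' * (N + 1) + y' < a * (N + 1) + y :=
  Nat.lt_of_lt_of_le (Nat.add_lt_add_left h2 _)
    (Nat.add_le_add_right (Nat.mul_le_mul_right _ h1) _)

private lemma measure_lt' {a' a y' y N : ℕ} (h1 : a' < a) (h2 : y' ≤ N) :
    a' * (N + 1) + y' < a * (N + 1) + y := by
  have : a' * (N + 1) + y' < (a' + 1) * (N + 1) := by
    rw [add_mul, one_mul]
    exact Nat.add_lt_add_left (Nat.lt_succ_of_le h2) _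
  exact Nat.lt_of_lt_of_le this
    (Nat.le_trans (Nat.mul_le_mul_right _ h1) (Nat.le_add_right _ _))

private lemma aux (C : Set A) (hC : C.Finite) :
    ∀ (m : ℕ) (X Y : Set A), X ⊆ C → Y ⊆ C → X + Y ⊆ C → 0 ∈ X → 0 ∈ Y →
      (2 * (X + Y).ncard - X.ncard - Y.ncard) * (C.ncard + 1) + Y.ncard ≤ m →
      (pConst A ≤ ((X + Y).ncard : ℕ∞) ∨ X.ncard + Y.ncard ≤ (X + Y).ncard + 1) := by
  intro m
  induction m with
  | zero =>
    intro X Y hXC hYC hXYC h0X h0Y hm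
    exfalso
    have hYfin : Y.Finite := hC.subset hYC
    have : 0 < Y.ncard := Set.Nonempty.ncard_pos hYfin ⟨0, h0Y⟩
    omega
  | succ m ih =>
    intro X Y hXC hYC hXYC h0X h0Y hm
    have hXfin : X.Finite := hC.subset hXC
    have hYfin : Y.Finite := hC.subset hYC
    have hXYfin : (X + Y).Finite := hC.subset hXYC
    have hXsub : X ⊆ X + Y := subset_add_right h0Y
    have hYsub : Y ⊆ X + Y := subset_add_left h0X
    have hxle : X.ncard ≤ (X + Y).ncard := Set.ncard_le_ncard hXsub hXYfin
    have hyle : Y.ncard ≤ (X + Y).ncard := Set.ncard_le_ncard hYsub hXYfin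
    by_cases hinter : X ∩ Y ⊆ {0}
    · right
      have h1 : (X ∪ Y).ncard + (X ∩ Y).ncard = X.ncard + Y.ncard :=
        Set.ncard_union_add_ncard_inter X Y hXfin hYfin
      have h2 : (X ∪ Y).ncard ≤ (X + Y).ncard :=
        Set.ncard_le_ncard (Set.union_subset hXsub hYsub) hXYfin
      have h3 : (X ∩ Y).ncard ≤ 1 := by
        calc (X ∩ Y).ncard ≤ ({0} : Set A).ncard :=
              Set.ncard_le_ncard hinter (Set.finite_singleton 0)
          _ = 1 := Set.ncard_singleton 0
      omega
    · obtain ⟨z, hzXY, hz0⟩ : ∃ z, z ∈ X ∩ Y ∧ z ≠ 0 := by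
        rcases Set.not_subset.mp hinter with ⟨z, hz, hz'⟩
        exact ⟨z, hz, by simpa using hz'⟩
      obtain ⟨hzX, hzY⟩ := hzXY
      by_cases hXz : ∀ x ∈ X, x + z ∈ X
      · left
        calc pConst A ≤ X.encard := pConst_le_right hz0 h0X hXz
          _ ≤ (X + Y).encard := Set.encard_mono hXsub
          _ = ((X + Y).ncard : ℕ∞) := encard_eq_coe_ncard hXYfin
      by_cases hYz : ∀ y ∈ Y, z + y ∈ Y
      · left
        calc pConst A ≤ Y.encard := pConst_le_left hz0 h0Y hYz
          _ ≤ (X + Y).encard := Set.encard_mono hYsub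
          _ = ((X + Y).ncard : ℕ∞) := encard_eq_coe_ncard hXYfin
      push_neg at hXz hYz
      obtain ⟨xb, hxbX, hxbz⟩ := hXz
      obtain ⟨yb, hybY, hzyb⟩ := hYz
      -- the two translates
      have hXzsub : (fun x => x + z) '' X ⊆ X + Y := by
        rintro _ ⟨x, hx, rfl⟩; exact Set.add_mem_add hx hzY
      have hzYsub : (fun y => z + y) '' Y ⊆ X + Y := by
        rintro _ ⟨y, hy, rfl⟩; exact Set.add_mem_add hzX hy
      have hafin : (((fun x => x + z) '' X) \ X).Finite :=
        (hXYfin.subset hXzsub).subset Set.diff_subset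
      have hbfin : (((fun y => z + y) '' Y) \ Y).Finite :=
        (hXYfin.subset hzYsub).subset Set.diff_subset
      set a := (((fun x => x + z) '' X) \ X).ncard with ha_def
      set b := (((fun y => z + y) '' Y) \ Y).ncard with hb_def
      have ha1 : 1 ≤ a :=
        Set.Nonempty.ncard_pos hafin ⟨xb + z, Set.mem_image_of_mem _ hxbX, hxbz⟩
      have hb1 : 1 ≤ b :=
        Set.Nonempty.ncard_pos hbfin ⟨z + yb, Set.mem_image_of_mem _ hybY, hzyb⟩
      -- images of the "bad" sets
      have himDY : (fun y => z + y) '' {y ∈ Y | z + y ∉ Y}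
          = ((fun y => z + y) '' Y) \ Y := by
        apply Set.ext; intro w
        constructor
        · rintro ⟨y, ⟨hy, hny⟩, rfl⟩; exact ⟨Set.mem_image_of_mem _ hy, hny⟩
        · rintro ⟨⟨y, hy, rfl⟩, hnw⟩; exact ⟨y, ⟨hy, hnw⟩, rfl⟩
      have himDX : (fun x => x + z) '' {x ∈ X | x + z ∉ X}
          = ((fun x => x + z) '' X) \ X := by
        apply Set.ext; intro w
        constructor
        · rintro ⟨x, ⟨hx, hnx⟩, rfl⟩; exact ⟨Set.mem_image_of_mem _ hx, hnx⟩
        · rintro ⟨⟨x, hx, rfl⟩, hnw⟩; exact ⟨x, ⟨hx, hnw⟩, rfl⟩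
      have hDYcard : {y ∈ Y | z + y ∉ Y}.ncard = b := by
        rw [← Set.ncard_image_of_injective {y ∈ Y | z + y ∉ Y} (add_right_injective z),
          himDY]
      have hDXcard : {x ∈ X | x + z ∉ X}.ncard = a := by
        rw [← Set.ncard_image_of_injective {x ∈ X | x + z ∉ X} (add_left_injective z),
          himDX]
      have hDYsub : {y ∈ Y | z + y ∉ Y} ⊆ Y := Set.sep_subset _ _
      have hDXsub : {x ∈ X | x + z ∉ X} ⊆ X := Set.sep_subset _ _
      have hbley : b ≤ Y.ncard := by
        rw [← hDYcard]; exact Set.ncard_le_ncard hDYsub hYfin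
      have halex : a ≤ X.ncard := by
        rw [← hDXcard]; exact Set.ncard_le_ncard hDXsub hXfin
      rcases le_or_gt b a with hab | hab
      · -- Transform 1 : X' = X ∪ (X+z), Y' = {y ∈ Y | z+y ∈ Y}
        set X' : Set A := X ∪ (fun x => x + z) '' X with hX'def
        set Y' : Set A := {y ∈ Y | z + y ∈ Y} with hY'def
        have h0X' : (0 : A) ∈ X' := Or.inl h0X
        have h0Y' : (0 : A) ∈ Y' := ⟨h0Y, by simpa using hzY⟩
        have hX'sub : X' ⊆ X + Y := Set.union_subset hXsub hXzsub
        have hsum : X' + Y' ⊆ X + Y := by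
          intro w hw
          rw [Set.mem_add] at hw
          obtain ⟨u, hu, v, hv, rfl⟩ := hw
          rcases hu with hu | ⟨x, hx, rfl⟩
          · exact Set.add_mem_add hu hv.1
          · rw [add_assoc]; exact Set.add_mem_add hx hv.2
        have hX'C : X' ⊆ C := hX'sub.trans hXYC
        have hY'C : Y' ⊆ C := (Set.sep_subset _ _).trans hYC
        have hsumC : X' + Y' ⊆ C := hsum.trans hXYC
        -- cardinalities
        have hX'card : X'.ncard = X.ncard + a := by
          rw [hX'def, ← Set.union_diff_self,
            Set.ncard_union_eq Set.disjoint_sdiff_right hXfin hafin]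
        have hY'eq : Y' = Y \ {y ∈ Y | z + y ∉ Y} := by
          apply Set.ext; intro y
          simp only [hY'def, Set.mem_setOf_eq, Set.mem_diff, Set.mem_sep_iff]
          tauto
        have hY'card : Y'.ncard = Y.ncard - b := by
          rw [hY'eq, Set.ncard_diff hDYsub (hYfin.subset hDYsub), hDYcard]
        -- measure decreases
        have hc' : (X' + Y').ncard ≤ (X + Y).ncard := Set.ncard_le_ncard hsum hXYfin
        have hx'le : X'.ncard ≤ (X' + Y').ncard :=
          Set.ncard_le_ncard (subset_add_right h0Y') (hC.subset hsumC)
        have hy'le : Y'.ncard ≤ (X' + Y').ncard :=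
          Set.ncard_le_ncard (subset_add_left h0X') (hC.subset hsumC)
        have hcomp : 2 * (X' + Y').ncard - X'.ncard - Y'.ncard
            ≤ 2 * (X + Y).ncard - X.ncard - Y.ncard := by omega
        have hylt : Y'.ncard < Y.ncard := by omega
        have hm' : (2 * (X' + Y').ncard - X'.ncard - Y'.ncard) * (C.ncard + 1) + Y'.ncard
            ≤ m := by
          have := measure_lt (N := C.ncard) hcomp hylt
          omega
        rcases ih X' Y' hX'C hY'C hsumC h0X' h0Y' hm' with hres | hres
        · left
          exact hres.trans (Nat.cast_le.mpr hc')
        · right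
          omega
      · -- Transform 2 : X'' = {x ∈ X | x + z ∈ X}, Y'' = Y ∪ (z+Y)
        set X'' : Set A := {x ∈ X | x + z ∈ X} with hX''def
        set Y'' : Set A := Y ∪ (fun y => z + y) '' Y with hY''def
        have h0X'' : (0 : A) ∈ X'' := ⟨h0X, by simpa using hzX⟩
        have h0Y'' : (0 : A) ∈ Y'' := Or.inl h0Y
        have hY''sub : Y'' ⊆ X + Y := Set.union_subset hYsub hzYsub
        have hsum : X'' + Y'' ⊆ X + Y := by
          intro w hw
          rw [Set.mem_add] at hw
          obtain ⟨u, hu, v, hv, rfl⟩ := hw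
          rcases hv with hv | ⟨y, hy, rfl⟩
          · exact Set.add_mem_add hu.1 hv
          · rw [← add_assoc]; exact Set.add_mem_add hu.2 hy
        have hX''C : X'' ⊆ C := ((Set.sep_subset _ _).trans hXC)
        have hY''C : Y'' ⊆ C := hY''sub.trans hXYC
        have hsumC : X'' + Y'' ⊆ C := hsum.trans hXYC
        have hX''eq : X'' = X \ {x ∈ X | x + z ∉ X} := by
          apply Set.ext; intro x
          simp only [hX''def, Set.mem_setOf_eq, Set.mem_diff, Set.mem_sep_iff]
          tauto
        have hX''card : X''.ncard = X.ncard - a := by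
          rw [hX''eq, Set.ncard_diff hDXsub (hXfin.subset hDXsub), hDXcard]
        have hY''card : Y''.ncard = Y.ncard + b := by
          rw [hY''def, ← Set.union_diff_self,
            Set.ncard_union_eq Set.disjoint_sdiff_right hYfin hbfin]
        have hc'' : (X'' + Y'').ncard ≤ (X + Y).ncard := Set.ncard_le_ncard hsum hXYfin
        have hx''le : X''.ncard ≤ (X'' + Y'').ncard :=
          Set.ncard_le_ncard (subset_add_right h0Y'') (hC.subset hsumC)
        have hy''le : Y''.ncard ≤ (X'' + Y'').ncard :=
          Set.ncard_le_ncard (subset_add_left h0X'') (hC.subset hsumC)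
        have hcomp : 2 * (X'' + Y'').ncard - X''.ncard - Y''.ncard
            < 2 * (X + Y).ncard - X.ncard - Y.ncard := by omega
        have hyN : Y''.ncard ≤ C.ncard :=
          Set.ncard_le_ncard hY''C hC
        have hm' : (2 * (X'' + Y'').ncard - X''.ncard - Y''.ncard) * (C.ncard + 1)
            + Y''.ncard ≤ m := by
          have := measure_lt' (y := Y.ncard) hcomp hyN
          omega
        rcases ih X'' Y'' hX''C hY''C hsumC h0X'' h0Y'' hm' with hres | hres
        · left
          exact hres.trans (Nat.cast_le.mpr hc'')
        · right
          omega

end Aux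
section Rest
variable {A : Type*} [AddCancelMonoid A]

private lemma core (X Y : Set A) (h0X : 0 ∈ X) (h0Y : 0 ∈ Y) :
    min (pConst A) (X.encard + Y.encard - 1) ≤ (X + Y).encard := by
  by_cases hfin : (X + Y).Finite
  · have hXsub : X ⊆ X + Y := subset_add_right h0Y
    have hYsub : Y ⊆ X + Y := subset_add_left h0X
    have hXfin : X.Finite := hfin.subset hXsub
    have hYfin : Y.Finite := hfin.subset hYsub
    rcases aux (X + Y) hfin _ X Y hXsub hYsub subset_rfl h0X h0Y le_rfl with hp | hcard
    · exact le_trans (min_le_left _ _) (by rwa [encard_eq_coe_ncard hfin])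
    · refine le_trans (min_le_right _ _) ?_
      rw [encard_eq_coe_ncard hXfin, encard_eq_coe_ncard hYfin, encard_eq_coe_ncard hfin]
      have h : X.ncard + Y.ncard - 1 ≤ (X + Y).ncard := by omega
      exact_mod_cast h
  · rw [Set.Infinite.encard_eq hfin]
    exact le_top

private lemma core_units (X Y : Set A) (hu : ∃ u ∈ X, IsAddUnit u)
    (hv : ∃ v ∈ Y, IsAddUnit v) :
    min (pConst A) (X.encard + Y.encard - 1) ≤ (X + Y).encard := by
  obtain ⟨u, huX, hu⟩ := hu
  obtain ⟨v, hvY, hv⟩ := hv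
  set s : A := ↑(-hu.addUnit) with hs_def
  set t : A := ↑(-hv.addUnit) with ht_def
  have hsu : s + u = 0 := by
    have := AddUnits.neg_add hu.addUnit
    rwa [IsAddUnit.addUnit_spec] at this
  have hvt : v + t = 0 := by
    have := AddUnits.add_neg hv.addUnit
    rwa [IsAddUnit.addUnit_spec] at this
  have h0X' : (0 : A) ∈ {s} + X := by
    rw [Set.singleton_add]; exact ⟨u, huX, hsu⟩
  have h0Y' : (0 : A) ∈ Y + {t} := by
    rw [Set.add_singleton]; exact ⟨v, hvY, hvt⟩
  have hcore := core ({s} + X) (Y + {t}) h0X' h0Y'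
  have e1 : ({s} + X).encard = X.encard := by
    rw [Set.singleton_add]
    exact Set.InjOn.encard_image ((add_right_injective s).injOn)
  have e2 : (Y + {t}).encard = Y.encard := by
    rw [Set.add_singleton]
    exact Set.InjOn.encard_image ((add_left_injective t).injOn)
  have e3 : (({s} + X) + (Y + {t})).encard = (X + Y).encard := by
    have hassoc : ({s} + X) + (Y + {t}) = {s} + ((X + Y) + {t}) := by
      rw [add_assoc, ← add_assoc X Y {t}]
    rw [hassoc, Set.singleton_add,
      Set.InjOn.encard_image ((add_right_injective s).injOn),
      Set.add_singleton,
      Set.InjOn.encard_image ((add_left_injective t).injOn)]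
  rw [e1, e2, e3] at hcore
  exact hcore

private lemma sum_nonempty_mem :
    ∀ (L : List (Set A)) (S : Set A), S ∈ L → L.sum.Nonempty → S.Nonempty := by
  intro L
  induction L with
  | nil => intro S hS; simp at hS
  | cons T t ihl =>
    intro S hS h
    rw [List.sum_cons] at h
    obtain ⟨w, hw⟩ := h
    rw [Set.mem_add] at hw
    obtain ⟨x, hx, y, hy, _⟩ := hw
    rcases List.mem_cons.mp hS with rfl | hS'
    · exact ⟨x, hx⟩
    · exact ihl S hS' ⟨y, hy⟩

private lemma sum_units :
    ∀ L : List (Set A), (∀ S ∈ L, ∃ u ∈ S, IsAddUnit u) → ∃ u ∈ L.sum, IsAddUnit u := by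
  intro L
  induction L with
  | nil =>
    intro _
    refine ⟨0, ?_, isAddUnit_zero⟩
    simp [List.sum_nil]
  | cons T t ihl =>
    intro h
    obtain ⟨u, hu, huu⟩ := h T (by simp)
    obtain ⟨v, hv, hvv⟩ := ihl (fun S hS => h S (by simp [hS]))
    exact ⟨u + v, by rw [List.sum_cons]; exact Set.add_mem_add hu hv, huu.add hvv⟩

private lemma len_le_sum :
    ∀ L : List (Set A), (∀ S ∈ L, S.Nonempty) →
      (L.length : ℕ∞) ≤ (L.map Set.encard).sum := by
  intro L
  induction L with
  | nil => intro _; simp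
  | cons T t ihl =>
    intro h
    rw [List.map_cons, List.sum_cons, List.length_cons]
    have h1 : 1 ≤ T.encard := Set.one_le_encard_iff_nonempty.mpr (h T (by simp))
    have h2 := ihl (fun S hS => h S (by simp [hS]))
    calc ((t.length + 1 : ℕ) : ℕ∞) = (t.length : ℕ∞) + 1 := by push_cast; ring
      _ ≤ (t.map Set.encard).sum + T.encard := add_le_add h2 h1
      _ = T.encard + (t.map Set.encard).sum := add_comm _ _

end Rest
section Final
variable {A : Type*} [AddCancelMonoid A]

private lemma list_main :
    ∀ L : List (Set A), L ≠ [] → (∀ S ∈ L, ∃ u ∈ S, IsAddUnit u) →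
      min (pConst A) ((L.map Set.encard).sum + 1 - L.length) ≤ L.sum.encard := by
  intro L
  induction L with
  | nil => intro h; exact absurd rfl h
  | cons T t ihl =>
    intro _ hunit
    by_cases ht : t = []
    · subst ht
      simp only [List.map_cons, List.map_nil, List.sum_cons, List.sum_nil,
        List.length_cons, List.length_nil, add_zero]
      have heq : T.encard + 1 - ((0 + 1 : ℕ) : ℕ∞) = T.encard := by
        rw [show ((0 + 1 : ℕ) : ℕ∞) = ((1 : ℕ) : ℕ∞) by norm_num]
        exact enat_add_nat_sub T.encard 1
      rw [heq]
      exact min_le_right _ _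
    · have hT : ∃ u ∈ T, IsAddUnit u := hunit T (by simp)
      have htail : ∀ S ∈ t, ∃ u ∈ S, IsAddUnit u := fun S hS => hunit S (by simp [hS])
      have hW := ihl ht htail
      have hWunit := sum_units t htail
      have hcu := core_units T t.sum hT hWunit
      rw [List.sum_cons, List.map_cons, List.sum_cons, List.length_cons]
      have hk : ((t.length : ℕ) : ℕ∞) ≤ (t.map Set.encard).sum :=
        len_le_sum t (fun S hS => ⟨(htail S hS).choose, (htail S hS).choose_spec.1⟩)
      obtain ⟨c, hc⟩ := exists_add_of_le hk
      have heS1 : (1 : ℕ∞) ≤ T.encard :=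
        Set.one_le_encard_iff_nonempty.mpr ⟨hT.choose, hT.choose_spec.1⟩
      refine le_trans ?_ hcu
      refine le_min (min_le_left _ _) ?_
      rcases le_total (pConst A) ((t.map Set.encard).sum + 1 - (t.length : ℕ∞)) with hpB | hBp
      · have hW' : pConst A ≤ t.sum.encard := by rwa [min_eq_left hpB] at hW
        refine le_trans (min_le_left _ _) ?_
        calc pConst A ≤ t.sum.encard := hW'
          _ = t.sum.encard + 1 - 1 := by
              rw [show (1 : ℕ∞) = ((1 : ℕ) : ℕ∞) from rfl,
                enat_add_nat_sub t.sum.encard 1]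
          _ ≤ T.encard + t.sum.encard - 1 := by
              refine tsub_le_tsub_right ?_ 1
              calc t.sum.encard + 1 = 1 + t.sum.encard := add_comm _ _
                _ ≤ T.encard + t.sum.encard := add_le_add_left heS1 _
      · have hW' : (t.map Set.encard).sum + 1 - (t.length : ℕ∞) ≤ t.sum.encard := by
          rwa [min_eq_right hBp] at hW
        refine le_trans (min_le_right _ _) ?_
        have hBval : (t.map Set.encard).sum + 1 - (t.length : ℕ∞) = c + 1 := by
          rw [hc, show (t.length : ℕ∞) + c + 1 = (c + 1) + (t.length : ℕ∞) by ring,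
            enat_add_nat_sub]
        have hG : T.encard + (t.map Set.encard).sum + 1 - ((t.length + 1 : ℕ) : ℕ∞)
            = T.encard + c := by
          rw [hc, show T.encard + ((t.length : ℕ∞) + c) + 1
              = (T.encard + c) + ((t.length + 1 : ℕ) : ℕ∞) by push_cast; ring,
            enat_add_nat_sub]
        rw [hG]
        have h1 : c + 1 ≤ t.sum.encard := hBval ▸ hW'
        calc T.encard + c = T.encard + (c + 1) - 1 := by
              rw [← add_assoc, show (1 : ℕ∞) = ((1 : ℕ) : ℕ∞) from rfl,
                enat_add_nat_sub]
          _ ≤ T.encard + t.sum.encard - 1 :=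
              tsub_le_tsub_right (add_le_add_right h1 _) 1

end Final

theorem stmt7 {A : Type*} [AddCancelMonoid A] (n : ℕ) (hn : 1 ≤ n)
    (X : Fin n → Set A)
    (h : ((List.ofFn fun i => X i ∩ {a | IsAddUnit a}).sum).Nonempty) :
    min (pConst A) ((∑ i, (X i).encard) + 1 - n) ≤ ((List.ofFn X).sum).encard := by
  have hmem : ∀ i : Fin n, ∃ u ∈ X i, IsAddUnit u := by
    intro i
    have hne : (X i ∩ {a | IsAddUnit a}).Nonempty := by
      refine sum_nonempty_mem _ _ ?_ h
      rw [List.mem_ofFn]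
      exact ⟨i, rfl⟩
    obtain ⟨u, hu1, hu2⟩ := hne
    exact ⟨u, hu1, hu2⟩
  have hne : List.ofFn X ≠ [] := by
    intro hnil
    have hlen : (List.ofFn X).length = n := List.length_ofFn
    rw [hnil] at hlen
    simp at hlen
    omega
  have hmain := list_main (List.ofFn X) hne (by
    intro S hS
    rw [List.mem_ofFn] at hS
    obtain ⟨i, rfl⟩ := hS
    exact hmem i)
  have hsum : ((List.ofFn X).map Set.encard).sum = ∑ i, (X i).encard := by
    rw [List.map_ofFn, List.sum_ofFn]
    simp [Function.comp]
  rw [hsum, List.length_ofFn] at hmain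
  exact hmain
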